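/- Every finitely generated nilpotent group is balanced. Consequently, every virtually nilpotent group is balanced. -/

import Mathlib

set_option maxHeartbeats 1000000

open scoped commutatorElement

def IsBalanced (G : Type*) [Group G] : Prop :=
  ∀ g h : G, ¬ IsOfFinOrder h → ∀ k l : ℤ, k ≠ 0 → l ≠ 0 →
    g * h ^ k * g⁻¹ = h ^ l → |k| = |l|

open Polynomial in
lemma dvd_of_smul_eq {M : Type*} [AddCommGroup M] [Module.Finite ℤ M]
    (f : M →ₗ[ℤ] M) (z : M) (hz : ∀ n : ℤ, n ≠ 0 → n • z ≠ 0)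
    (k l : ℤ) (hk : k ≠ 0) (he : f (k • z) = l • z) : k ∣ l := by
  classical
  set T := Submodule.torsion ℤ M with hT
  have hle : T ≤ T.comap f := by
    rintro x ⟨a, ha⟩
    rw [Submonoid.smul_def] at ha
    refine Submodule.mem_comap.2 ⟨a, ?_⟩
    rw [Submonoid.smul_def]
    calc (a : ℤ) • f x = f ((a : ℤ) • x) := (f.map_smul _ _).symm
      _ = 0 := by rw [ha, map_zero]
  let fb : M ⧸ T →ₗ[ℤ] M ⧸ T := Submodule.mapQ T T f hle
  let zb : M ⧸ T := Submodule.Quotient.mk z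
  have hzb : zb ≠ 0 := by
    intro h
    rw [Submodule.Quotient.mk_eq_zero] at h
    obtain ⟨a, ha⟩ := h
    rw [Submonoid.smul_def] at ha
    exact hz a (nonZeroDivisors.coe_ne_zero a) ha
  have hrel : fb (k • zb) = l • zb := by
    have h0 : (k • zb) = Submodule.Quotient.mk (k • z) := by simp [zb]
    rw [h0]
    show Submodule.mapQ T T f hle (Submodule.Quotient.mk (k • z)) = l • zb
    rw [Submodule.mapQ_apply, he]
    simp [zb]
  haveI : Module.IsTorsionFree ℤ (M ⧸ T) := by
    rw [hT]; exact Submodule.QuotientTorsion.instIsTorsionFree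
  let b := Module.Free.chooseBasis ℤ (M ⧸ T)
  let A := LinearMap.toMatrix b b fb
  let v : Module.Free.ChooseBasisIndex ℤ (M ⧸ T) → ℤ := ⇑(b.repr zb)
  have hv : v ≠ 0 := by
    intro h
    apply hzb
    have h2 : b.repr zb = 0 := Finsupp.ext fun i => congrFun h i
    simpa using congrArg b.repr.symm h2
  have hAv : (A.mulVec fun i => k * v i) = fun i => l * v i := by
    have h1 : A.mulVec (b.repr (k • zb)) = b.repr (fb (k • zb)) :=
      LinearMap.toMatrix_mulVec_repr b b fb (k • zb)
    rw [hrel] at h1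
    have e1 : ⇑(b.repr (k • zb)) = fun i => k * v i := by
      funext i; rw [map_smul]; simp [v, smul_eq_mul]
    have e2 : ⇑(b.repr (l • zb)) = fun i => l * v i := by
      funext i; rw [map_smul]; simp [v, smul_eq_mul]
    rw [← e1, ← e2, h1]
  -- move to ℚ
  let Aq := A.map (Int.cast : ℤ → ℚ)
  let vq : Module.Free.ChooseBasisIndex ℤ (M ⧸ T) → ℚ := fun i => ((v i : ℤ) : ℚ)
  have hvq : vq ≠ 0 := by
    obtain ⟨i, hi⟩ := Function.ne_iff.1 hv
    exact Function.ne_iff.2 ⟨i, by simpa [vq] using hi⟩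
  set q : ℚ := (l : ℚ) / (k : ℚ) with hq
  have hkq : (k : ℚ) ≠ 0 := Int.cast_ne_zero.2 hk
  have key : ∀ i, (k : ℚ) * (∑ j, (A i j : ℚ) * vq j) = (l : ℚ) * vq i := by
    intro i
    have h5 := congrFun hAv i
    simp only [Matrix.mulVec, dotProduct] at h5
    have h6 : ((∑ j, A i j * (k * v j) : ℤ) : ℚ) = ((l * v i : ℤ) : ℚ) := by
      exact_mod_cast congrArg (fun t : ℤ => (t : ℚ)) h5
    push_cast at h6
    rw [Finset.mul_sum, ← h6]
    exact Finset.sum_congr rfl fun j _ => by ring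
  have hAvq : Aq.mulVec vq = fun i => q * vq i := by
    funext i
    show ∑ j, Aq i j * vq j = q * vq i
    have h7 : ∑ j, Aq i j * vq j = ∑ j, (A i j : ℚ) * vq j := rfl
    rw [h7]
    have := key i
    rw [hq, div_mul_eq_mul_div, eq_div_iff hkq]
    linarith [this]
  have hdet : ((q • (1 : Matrix (Module.Free.ChooseBasisIndex ℤ (M ⧸ T)) _ ℚ)) - Aq).det = 0 := by
    rw [← Matrix.exists_mulVec_eq_zero_iff]
    refine ⟨vq, hvq, ?_⟩
    rw [Matrix.sub_mulVec, Matrix.smul_mulVec, Matrix.one_mulVec, hAvq]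
    funext i; simp
  have hcp : (Aq.charpoly).eval q = 0 := by
    rw [Matrix.charpoly, ← Polynomial.coe_evalRingHom, RingHom.map_det]
    convert hdet using 2
    ext i j
    by_cases h : i = j
    · subst h
      simp [Matrix.charmatrix_apply_eq, Aq, Matrix.one_apply, Matrix.smul_apply]
    · simp [Matrix.charmatrix_apply_ne _ _ _ h, Matrix.one_apply, h, Aq, Matrix.smul_apply]
  have hint : IsIntegral ℤ q := by
    refine ⟨A.charpoly, A.charpoly_monic, ?_⟩
    rw [show algebraMap ℤ ℚ = Int.castRingHom ℚ from rfl, Polynomial.eval₂_eq_eval_map,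
      ← Matrix.charpoly_map]
    exact hcp
  obtain ⟨y, hy⟩ := IsIntegrallyClosed.isIntegral_iff.mp hint
  refine ⟨y, ?_⟩
  have h8 : (l : ℚ) = ((k * y : ℤ) : ℚ) := by
    have hy' : (y : ℚ) = q := hy
    push_cast
    rw [hy', hq]
    field_simp
  exact_mod_cast h8

lemma abelian_aux {B : Type*} [CommGroup B] [Group.FG B] (e : B →* B) (z : B)
    (hz : ¬IsOfFinOrder z) (k l : ℤ) (hk : k ≠ 0) (he : e (z ^ k) = z ^ l) : k ∣ l := by
  haveI : Module.Finite ℤ (Additive B) :=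
    Module.Finite.iff_addGroup_fg.mpr (GroupFG.iff_add_fg.mp ‹_›)
  have hinj := injective_zpow_iff_not_isOfFinOrder.2 hz
  refine dvd_of_smul_eq (MonoidHom.toAdditive e).toIntLinearMap (Additive.ofMul z) ?_ k l hk ?_
  · intro n hn h
    apply hn
    have : z ^ n = 1 := h
    exact hinj (by rw [this, zpow_zero] : z ^ n = z ^ (0:ℤ))
  · show Additive.ofMul (e (z ^ k)) = l • Additive.ofMul z
    rw [he]; rfl

lemma abelian_abs_eq {B : Type*} [CommGroup B] [Group.FG B] (e : B ≃* B) (z : B)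
    (hz : ¬IsOfFinOrder z) (k l : ℤ) (hk : k ≠ 0) (hl : l ≠ 0)
    (he : e (z ^ k) = z ^ l) : |k| = |l| := by
  have d1 : k ∣ l := abelian_aux e.toMonoidHom z hz k l hk he
  have d2 : l ∣ k := by
    refine abelian_aux e.symm.toMonoidHom z hz l k hl ?_
    show e.symm (z ^ l) = z ^ k
    rw [← he, MulEquiv.symm_apply_apply]
  have d1' : |k| ∣ |l| := (abs_dvd _ _).2 ((dvd_abs _ _).2 d1)
  have d2' : |l| ∣ |k| := (abs_dvd _ _).2 ((dvd_abs _ _).2 d2)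
  exact Int.dvd_antisymm (abs_nonneg k) (abs_nonneg l) d1' d2'


lemma abelian_abs_eq' {Q : Type*} [Group Q] (A : Subgroup Q)
    (hcent : ∀ a ∈ A, ∀ q : Q, Commute q a) (hfg : A.FG)
    (ψ : Q ≃* Q) (hψA : Subgroup.map (ψ : Q →* Q) A = A)
    (z : Q) (hzA : z ∈ A) (hz : ¬IsOfFinOrder z)
    (k l : ℤ) (hk : k ≠ 0) (hl : l ≠ 0) (hψ : ψ (z ^ k) = z ^ l) : |k| = |l| := by
  letI : CommGroup ↥A :=
    { (inferInstance : Group ↥A) with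
      mul_comm := fun a b => Subtype.ext ((hcent (b : Q) b.2 (a : Q)).eq) }
  haveI : Group.FG ↥A := by
    rw [Group.fg_iff_subgroup_fg]
    exact hfg
  let eA : ↥A ≃* ↥A := (ψ.subgroupMap A).trans (MulEquiv.subgroupCongr hψA)
  have heA : ∀ a : ↥A, ((eA a : ↥A) : Q) = ψ (a : Q) := fun a => rfl
  let zA : ↥A := ⟨z, hzA⟩
  have hcoe : ∀ j : ℤ, ((zA ^ j : ↥A) : Q) = z ^ j := fun j => by
    rw [SubgroupClass.coe_zpow]
  have hzAfin : ¬ IsOfFinOrder zA := by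
    intro hf
    obtain ⟨r, hr, hr1⟩ := isOfFinOrder_iff_pow_eq_one.1 hf
    refine hz (isOfFinOrder_iff_pow_eq_one.2 ⟨r, hr, ?_⟩)
    have := congrArg (fun x : ↥A => (x : Q)) hr1
    simpa using this
  refine abelian_abs_eq eA zA hzAfin k l hk hl ?_
  refine Subtype.ext ?_
  rw [heA]
  show ψ ((zA ^ k : ↥A) : Q) = ((zA ^ l : ↥A) : Q)
  rw [hcoe k, hcoe l, hψ]


open Subgroup in
lemma comm_gen {Q : Type*} [Group Q] (K : Subgroup Q) [K.Normal]
    (hcent : ⁅K, (⊤ : Subgroup Q)⁆ ≤ Subgroup.center Q)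
    (S T : Set Q) (hS : S ⊆ K)
    (hK : K ≤ Subgroup.closure S ⊔ ⁅K, (⊤ : Subgroup Q)⁆)
    (hT : Subgroup.closure T = ⊤) :
    ⁅K, (⊤ : Subgroup Q)⁆ ≤ Subgroup.closure {x | ∃ s ∈ S, ∃ t ∈ T, x = ⁅s, t⁆} := by
  set D := Subgroup.closure {x | ∃ s ∈ S, ∃ t ∈ T, x = ⁅s, t⁆} with hD
  have hcomm : ∀ x ∈ K, ∀ g w : Q, Commute w ⁅x, g⁆ := fun x hx g w =>
    Subgroup.mem_center_iff.1 (hcent (commutator_mem_commutator hx (mem_top g))) w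
  have conj_eq : ∀ c : Q, (∀ w : Q, Commute w c) → ∀ g : Q, g * c * g⁻¹ = c := by
    intro c hc g
    rw [(hc g).eq]; group
  -- Step 1
  have step1 : ∀ s ∈ S, ∀ g : Q, ⁅s, g⁆ ∈ D := by
    intro s hs
    have hsK : s ∈ K := hS hs
    let P : Subgroup Q :=
      { carrier := {g | ⁅s, g⁆ ∈ D}
        one_mem' := by
          show ⁅s, (1:Q)⁆ ∈ D
          rw [commutatorElement_one_right]; exact one_mem D
        mul_mem' := by
          intro g h hg hh
          show ⁅s, g * h⁆ ∈ D
          have hid : ⁅s, g * h⁆ = ⁅s, g⁆ * (g * ⁅s, h⁆ * g⁻¹) := by group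
          rw [hid, conj_eq _ (fun w => hcomm s hsK h w) g]
          exact mul_mem hg hh
        inv_mem' := by
          intro g hg
          show ⁅s, g⁻¹⁆ ∈ D
          have hid : ⁅s, g⁻¹⁆ = g⁻¹ * ⁅s, g⁆⁻¹ * (g⁻¹)⁻¹ := by group
          rw [hid, conj_eq _ (fun w => (hcomm s hsK g w).inv_right) g⁻¹]
          exact inv_mem hg }
    intro g
    have hTP : T ⊆ P := fun t ht => Subgroup.subset_closure ⟨s, hs, t, ht, rfl⟩
    have htop : (⊤ : Subgroup Q) ≤ P := by rw [← hT]; exact (Subgroup.closure_le P).2 hTP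
    exact htop (Subgroup.mem_top g)
  -- Step 2
  let R : Subgroup Q :=
    { carrier := {x | x ∈ K ∧ ∀ g : Q, ⁅x, g⁆ ∈ D}
      one_mem' := ⟨one_mem K, fun g => by
        rw [commutatorElement_one_left]; exact one_mem D⟩
      mul_mem' := by
        rintro x y ⟨hxK, hx⟩ ⟨hyK, hy⟩
        refine ⟨mul_mem hxK hyK, fun g => ?_⟩
        have hid : ⁅x * y, g⁆ = (x * ⁅y, g⁆ * x⁻¹) * ⁅x, g⁆ := by group
        rw [hid, conj_eq _ (fun w => hcomm y hyK g w) x]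
        exact mul_mem (hy g) (hx g)
      inv_mem' := by
        rintro x ⟨hxK, hx⟩
        refine ⟨inv_mem hxK, fun g => ?_⟩
        have hid : ⁅x⁻¹, g⁆ = x⁻¹ * ⁅x, g⁆⁻¹ * (x⁻¹)⁻¹ := by group
        rw [hid, conj_eq _ (fun w => (hcomm x hxK g w).inv_right) x⁻¹]
        exact inv_mem (hx g) }
  have hKR : K ≤ R := by
    refine le_trans hK (sup_le ?_ ?_)
    · refine (Subgroup.closure_le R).2 ?_
      intro s hs
      exact ⟨hS hs, step1 s hs⟩
    · intro b hb
      refine ⟨Subgroup.commutator_le_left K ⊤ hb, fun g => ?_⟩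
      have hb1 : ⁅b, g⁆ = 1 := commutatorElement_eq_one_iff_commute.2
        (((Subgroup.mem_center_iff.1 (hcent hb)) g).symm)
      rw [hb1]; exact one_mem D
  rw [Subgroup.commutator_le]
  intro x hx g _
  exact (hKR hx).2 g

open Subgroup in
lemma lcs_fg (N : Type*) [Group N] [Group.FG N] (i : ℕ) :
    ∃ S : Set N, S.Finite ∧ S ⊆ (Subgroup.lowerCentralSeries (⊤ : Subgroup N) i : Subgroup N) ∧
      Subgroup.lowerCentralSeries (⊤ : Subgroup N) i ≤ Subgroup.closure S ⊔ Subgroup.lowerCentralSeries (⊤ : Subgroup N) (i+1) := by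
  obtain ⟨T₀, hT₀, hT₀fin⟩ : ∃ T : Set N, Subgroup.closure T = ⊤ ∧ T.Finite :=
    (Subgroup.fg_iff ⊤).1 (Group.fg_def.1 ‹_›)
  induction i with
  | zero =>
    refine ⟨T₀, hT₀fin, by simp, ?_⟩
    rw [Subgroup.lowerCentralSeries_zero, hT₀]
    exact le_sup_left
  | succ i ih =>
    obtain ⟨S, hSfin, hSsub, hSle⟩ := ih
    have hsucc : ∀ n, Subgroup.lowerCentralSeries (⊤ : Subgroup N) (n+1) = ⁅Subgroup.lowerCentralSeries (⊤ : Subgroup N) n, (⊤ : Subgroup N)⁆ :=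
      fun n => rfl
    set π := QuotientGroup.mk' (Subgroup.lowerCentralSeries (⊤ : Subgroup N) (i+2)) with hπ
    have hπsurj : Function.Surjective π := QuotientGroup.mk'_surjective _
    set K := Subgroup.map π (Subgroup.lowerCentralSeries (⊤ : Subgroup N) i) with hK
    haveI : K.Normal := Subgroup.Normal.map (Subgroup.lowerCentralSeries_normal ⊤ i) π hπsurj
    have hmapcomm : ⁅K, (⊤ : Subgroup (N ⧸ Subgroup.lowerCentralSeries (⊤ : Subgroup N) (i+2)))⁆ =
        Subgroup.map π (Subgroup.lowerCentralSeries (⊤ : Subgroup N) (i+1)) := by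
      rw [hK, ← Subgroup.map_top_of_surjective π hπsurj, ← Subgroup.map_commutator,
        ← hsucc]
    have hker : ∀ x ∈ Subgroup.lowerCentralSeries (⊤ : Subgroup N) (i+2), π x = 1 := by
      intro x hx
      rwa [← QuotientGroup.ker_mk' (Subgroup.lowerCentralSeries (⊤ : Subgroup N) (i+2)), MonoidHom.mem_ker] at hx
    have hcent : ⁅K, (⊤ : Subgroup (N ⧸ Subgroup.lowerCentralSeries (⊤ : Subgroup N) (i+2)))⁆ ≤
        Subgroup.center (N ⧸ Subgroup.lowerCentralSeries (⊤ : Subgroup N) (i+2)) := by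
      rw [hmapcomm]
      rintro x ⟨y, hy, rfl⟩
      rw [Subgroup.mem_center_iff]
      intro g
      obtain ⟨w, rfl⟩ := hπsurj g
      have h1 : ⁅(π y : N ⧸ Subgroup.lowerCentralSeries (⊤ : Subgroup N) (i+2)), π w⁆ = 1 := by
        rw [← map_commutatorElement]
        apply hker
        rw [show i + 2 = (i + 1) + 1 from rfl, hsucc]
        exact Subgroup.commutator_mem_commutator hy (Subgroup.mem_top w)
      have := commutatorElement_eq_one_iff_commute.1 h1
      exact this.symm.eq
    have hKle : K ≤ Subgroup.closure (π '' S) ⊔ ⁅K, (⊤ : Subgroup _)⁆ := by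
      rw [hmapcomm, ← MonoidHom.map_closure, ← Subgroup.map_sup]
      exact Subgroup.map_mono hSle
    have hTtop : Subgroup.closure (π '' T₀) = ⊤ := by
      rw [← MonoidHom.map_closure, hT₀, Subgroup.map_top_of_surjective π hπsurj]
    have hmain := comm_gen K hcent (π '' S) (π '' T₀)
      (by rintro x ⟨s, hs, rfl⟩; exact Subgroup.mem_map_of_mem π (hSsub hs)) hKle hTtop
    -- the generating set downstairs
    refine ⟨(fun p : N × N => ⁅p.1, p.2⁆) '' (S ×ˢ T₀), (hSfin.prod hT₀fin).image _, ?_, ?_⟩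
    · rintro x ⟨⟨s, t⟩, ⟨hs, ht⟩, rfl⟩
      rw [SetLike.mem_coe, hsucc]
      exact Subgroup.commutator_mem_commutator (hSsub hs) (Subgroup.mem_top t)
    · intro x hx
      have hπx : π x ∈ ⁅K, (⊤ : Subgroup _)⁆ := by
        rw [hmapcomm]; exact Subgroup.mem_map_of_mem π hx
      have himg : {x | ∃ s ∈ π '' S, ∃ t ∈ π '' T₀, x = ⁅s, t⁆} =
          π '' ((fun p : N × N => ⁅p.1, p.2⁆) '' (S ×ˢ T₀)) := by
        ext y
        constructor
        · rintro ⟨s, ⟨s₀, hs₀, rfl⟩, t, ⟨t₀, ht₀, rfl⟩, rfl⟩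
          exact ⟨⁅s₀, t₀⁆, ⟨⟨s₀, t₀⟩, ⟨hs₀, ht₀⟩, rfl⟩, (map_commutatorElement π s₀ t₀).symm⟩
        · rintro ⟨y₀, ⟨⟨s₀, t₀⟩, ⟨hs₀, ht₀⟩, rfl⟩, rfl⟩
          exact ⟨π s₀, ⟨s₀, hs₀, rfl⟩, π t₀, ⟨t₀, ht₀, rfl⟩, map_commutatorElement π s₀ t₀⟩
      have hπx2 : π x ∈ Subgroup.map π (Subgroup.closure
          ((fun p : N × N => ⁅p.1, p.2⁆) '' (S ×ˢ T₀))) := by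
        rw [MonoidHom.map_closure, ← himg]
        exact hmain hπx
      obtain ⟨w, hw, hwx⟩ := hπx2
      have hker' : w⁻¹ * x ∈ Subgroup.lowerCentralSeries (⊤ : Subgroup N) (i+2) := by
        rw [← QuotientGroup.ker_mk' (Subgroup.lowerCentralSeries (⊤ : Subgroup N) (i+2)), MonoidHom.mem_ker]
        rw [← hπ, map_mul, map_inv, hwx]
        group
      have : x = w * (w⁻¹ * x) := by group
      rw [this]
      exact Subgroup.mul_mem _ (Subgroup.mem_sup_left hw) (Subgroup.mem_sup_right hker')

open Subgroup in
lemma nilpotent_fg_abs_eq {N : Type*} [Group N] [Group.FG N] [Group.IsNilpotent N]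
    (e : N ≃* N) (h : N) (hh : ¬IsOfFinOrder h) (k l : ℤ) (hk : k ≠ 0) (hl : l ≠ 0)
    (he : e (h ^ k) = h ^ l) : |k| = |l| := by
  classical
  obtain ⟨n, hn⟩ := Subgroup.nilpotent_iff_lowerCentralSeries.1 ‹_›
  have hsucc : ∀ j, Subgroup.lowerCentralSeries (⊤ : Subgroup N) (j+1) = ⁅Subgroup.lowerCentralSeries (⊤ : Subgroup N) j, (⊤ : Subgroup N)⁆ :=
    fun j => rfl
  set P : ℕ → Prop := fun j => IsOfFinOrder (QuotientGroup.mk' (Subgroup.lowerCentralSeries (⊤ : Subgroup N) j) h)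
    with hP
  have hP0 : P 0 := by
    haveI : Subsingleton (N ⧸ Subgroup.lowerCentralSeries (⊤ : Subgroup N) 0) :=
      QuotientGroup.subsingleton_quotient_top
    have h1 : (QuotientGroup.mk' (Subgroup.lowerCentralSeries (⊤ : Subgroup N) 0) h) = 1 := Subsingleton.elim _ _
    rw [hP]; simp only []; rw [h1]; exact IsOfFinOrder.one
  have hPn : ¬ P n := by
    intro hfin
    obtain ⟨m, hm, hm1⟩ := isOfFinOrder_iff_pow_eq_one.1 hfin
    apply hh
    refine isOfFinOrder_iff_pow_eq_one.2 ⟨m, hm, ?_⟩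
    have : h ^ m ∈ Subgroup.lowerCentralSeries (⊤ : Subgroup N) n := by
      rw [← QuotientGroup.ker_mk' (Subgroup.lowerCentralSeries (⊤ : Subgroup N) n), MonoidHom.mem_ker, map_pow]
      exact hm1
    rw [hn] at this
    exact this
  have hexists : ∃ i, P i ∧ ¬ P (i+1) := by
    by_contra hcon
    push_neg at hcon
    have : ∀ j, P j := by
      intro j
      induction j with
      | zero => exact hP0
      | succ j ih => exact hcon j ih
    exact hPn (this n)
  obtain ⟨i, hPi, hPi1⟩ := hexists
  obtain ⟨m, hm0, hmpow⟩ := isOfFinOrder_iff_pow_eq_one.1 hPi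
  have hmem : h ^ m ∈ Subgroup.lowerCentralSeries (⊤ : Subgroup N) i := by
    rw [← QuotientGroup.ker_mk' (Subgroup.lowerCentralSeries (⊤ : Subgroup N) i), MonoidHom.mem_ker, map_pow]
    exact hmpow
  set π := QuotientGroup.mk' (Subgroup.lowerCentralSeries (⊤ : Subgroup N) (i+1)) with hπdef
  have hπsurj : Function.Surjective π := QuotientGroup.mk'_surjective _
  have hker : ∀ x : N, π x = 1 ↔ x ∈ Subgroup.lowerCentralSeries (⊤ : Subgroup N) (i+1) := fun x =>
    QuotientGroup.eq_one_iff x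
  -- z
  set z := π h ^ (m : ℤ) with hzdef
  have hzfin : ¬ IsOfFinOrder z := by
    intro hzf
    apply hPi1
    obtain ⟨r, hr, hr1⟩ := isOfFinOrder_iff_pow_eq_one.1 hzf
    refine isOfFinOrder_iff_pow_eq_one.2 ⟨m * r, Nat.mul_pos hm0 hr, ?_⟩
    show (QuotientGroup.mk' _ h) ^ (m * r) = 1
    rw [pow_mul]
    rw [hzdef, zpow_natCast] at hr1
    exact hr1
  -- e preserves lower central series
  have hmaple : ∀ (f : N →* N) (j : ℕ),
      Subgroup.map f (Subgroup.lowerCentralSeries (⊤ : Subgroup N) j) ≤ Subgroup.lowerCentralSeries (⊤ : Subgroup N) j :=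
    fun f j => Subgroup.lowerCentralSeries.map f j
  have hmapeq : ∀ j, Subgroup.map (e : N →* N) (Subgroup.lowerCentralSeries (⊤ : Subgroup N) j) =
      Subgroup.lowerCentralSeries (⊤ : Subgroup N) j := by
    intro j
    refine le_antisymm (hmaple _ j) ?_
    intro x hx
    refine ⟨e.symm x, ?_, by simp⟩
    exact hmaple (e.symm : N →* N) j ⟨x, hx, rfl⟩
  set ψ := QuotientGroup.congr (Subgroup.lowerCentralSeries (⊤ : Subgroup N) (i+1)) (Subgroup.lowerCentralSeries (⊤ : Subgroup N) (i+1)) e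
    (hmapeq (i+1)) with hψdef
  have hψmk : ∀ x : N, ψ (π x) = π (e x) := fun x =>
    QuotientGroup.congr_mk' _ _ e (hmapeq (i+1)) x
  -- the abelian subgroup
  set A := Subgroup.map π (Subgroup.lowerCentralSeries (⊤ : Subgroup N) i) with hAdef
  have hAcent : ∀ a ∈ A, ∀ q : N ⧸ Subgroup.lowerCentralSeries (⊤ : Subgroup N) (i+1), Commute q a := by
    rintro a ⟨y, hy, rfl⟩ q
    obtain ⟨w, rfl⟩ := hπsurj q
    have h1 : ⁅(π y : N ⧸ Subgroup.lowerCentralSeries (⊤ : Subgroup N) (i+1)), π w⁆ = 1 := by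
      rw [← map_commutatorElement]
      rw [hker]
      rw [hsucc]
      exact Subgroup.commutator_mem_commutator hy (Subgroup.mem_top w)
    exact (commutatorElement_eq_one_iff_commute.1 h1).symm
  have hzA : z ∈ A := by
    rw [hzdef, zpow_natCast, ← map_pow]
    exact Subgroup.mem_map_of_mem π hmem
  -- A is finitely generated
  obtain ⟨S, hSfin, hSsub, hSle⟩ := lcs_fg N i
  have hAcl : A = Subgroup.closure (π '' S) := by
    refine le_antisymm ?_ ?_
    · rw [hAdef]
      refine le_trans (Subgroup.map_mono hSle) ?_
      rw [Subgroup.map_sup, MonoidHom.map_closure]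
      refine sup_le le_rfl ?_
      rintro x ⟨y, hy, rfl⟩
      rw [SetLike.mem_coe, ← hker y] at hy
      rw [hy]
      exact one_mem _
    · refine (Subgroup.closure_le _).2 ?_
      rintro x ⟨s, hs, rfl⟩
      exact Subgroup.mem_map_of_mem π (hSsub hs)
  have hAfg : A.FG := (Subgroup.fg_iff A).2 ⟨π '' S, hAcl.symm, hSfin.image π⟩
  -- ψ maps A to A
  have hψA : Subgroup.map (ψ : (N ⧸ Subgroup.lowerCentralSeries (⊤ : Subgroup N) (i+1)) →* _) A = A := by
    rw [hAdef, Subgroup.map_map]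
    have hcompeq : ((ψ : (N ⧸ Subgroup.lowerCentralSeries (⊤ : Subgroup N) (i+1)) →* _)).comp π =
        π.comp (e : N →* N) := MonoidHom.ext fun x => hψmk x
    rw [hcompeq, ← Subgroup.map_map, hmapeq i]
  have hrel : ψ (z ^ k) = z ^ l := by
    have e1 : z ^ k = π (h ^ ((m : ℤ) * k)) := by
      rw [hzdef, ← zpow_mul, ← map_zpow]
    have e2 : z ^ l = π (h ^ ((m : ℤ) * l)) := by
      rw [hzdef, ← zpow_mul, ← map_zpow]
    rw [e1, e2, hψmk]
    congr 1
    have e3 : e (h ^ ((m : ℤ) * k)) = (e (h ^ k)) ^ (m : ℤ) := by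
      rw [← map_zpow, ← zpow_mul, mul_comm]
    rw [e3, he, ← zpow_mul, mul_comm]
  exact abelian_abs_eq' A hAcent hAfg ψ hψA z hzA hzfin k l hk hl hrel

open Subgroup in
lemma balanced_of_normal {G : Type*} [Group G] (C : Subgroup G) [C.Normal] [C.FiniteIndex]
    (hfg : Group.FG ↥C) (hnil : Group.IsNilpotent ↥C) : IsBalanced G := by
  intro g h hfin k l hk hl heq
  have hm0 : C.index ≠ 0 := Subgroup.FiniteIndex.index_ne_zero
  have ha : h ^ (C.index : ℤ) ∈ C := by
    rw [zpow_natCast]; exact Subgroup.pow_index_mem C h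
  have hmap : Subgroup.map ((MulAut.conj g) : G →* G) C = C := by
    refine le_antisymm ?_ ?_
    · rintro x ⟨y, hy, rfl⟩
      exact Subgroup.Normal.conj_mem ‹C.Normal› y hy g
    · intro x hx
      refine ⟨g⁻¹ * x * g, ?_, ?_⟩
      · have := Subgroup.Normal.conj_mem ‹C.Normal› x hx g⁻¹
        simpa using this
      · show g * (g⁻¹ * x * g) * g⁻¹ = x
        group
  let ψ : ↥C ≃* ↥C := ((MulAut.conj g).subgroupMap C).trans (MulEquiv.subgroupCongr hmap)
  have hψcoe : ∀ x : ↥C, ((ψ x : ↥C) : G) = g * (x : G) * g⁻¹ := fun x => rfl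
  let α : ↥C := ⟨h ^ (C.index : ℤ), ha⟩
  have hαcoe : ∀ j : ℤ, ((α ^ j : ↥C) : G) = h ^ ((C.index : ℤ) * j) := fun j => by
    rw [show ((α ^ j : ↥C) : G) = (h ^ (C.index : ℤ)) ^ j from by rw [SubgroupClass.coe_zpow],
      ← zpow_mul]
  have hαfin : ¬ IsOfFinOrder α := by
    intro hf
    obtain ⟨r, hr, hr1⟩ := isOfFinOrder_iff_pow_eq_one.1 hf
    apply hfin
    refine isOfFinOrder_iff_pow_eq_one.2 ⟨C.index * r, Nat.mul_pos (Nat.pos_of_ne_zero hm0) hr, ?_⟩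
    have h2 := congrArg (fun x : ↥C => (x : G)) hr1
    have h3 : ((α ^ (r : ℤ) : ↥C) : G) = 1 := by
      rw [zpow_natCast]; simpa using h2
    rw [hαcoe] at h3
    rw [← zpow_natCast h (C.index * r)]
    rw [← h3]
    norm_cast
  have hconj : ∀ j : ℤ, g * h ^ ((C.index : ℤ) * j) * g⁻¹ = (g * h ^ j * g⁻¹) ^ (C.index : ℤ) := by
    intro j
    have := map_zpow (MulAut.conj g).toMonoidHom (h ^ j) (C.index : ℤ)
    simp only [MulAut.conj_apply, MulEquiv.coe_toMonoidHom] at this ⊢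
    rw [mul_comm (C.index : ℤ) j, zpow_mul]
    exact this
  have hrel : ψ (α ^ k) = α ^ l := by
    refine Subtype.ext ?_
    rw [hψcoe, hαcoe k, hαcoe l, hconj k, heq, ← zpow_mul, mul_comm]
  exact nilpotent_fg_abs_eq (N := ↥C) ψ α hαfin k l hk hl hrel

/-- Every finitely generated nilpotent group is balanced; consequently every virtually
nilpotent group is balanced. -/
theorem nilpotent_balanced :
    (∀ (G : Type) [Group G], Group.FG G → Group.IsNilpotent G → IsBalanced G) ∧
    (∀ (G : Type) [Group G],
      (∃ H : Subgroup G, Group.IsNilpotent H ∧ H.FiniteIndex) → IsBalanced G) := by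
  have part1 : ∀ (G : Type) [Group G], Group.FG G → Group.IsNilpotent G → IsBalanced G := by
    intro G _ hfg hnil
    haveI := hfg
    haveI := hnil
    refine balanced_of_normal (⊤ : Subgroup G) ?_ ?_
    · exact (Group.fg_iff_subgroup_fg ⊤).2 (Group.fg_def.1 hfg)
    · exact nilpotent_of_surjective (Subgroup.topEquiv (G := G)).symm.toMonoidHom
        (Subgroup.topEquiv (G := G)).symm.surjective
  refine ⟨part1, ?_⟩
  rintro G _ ⟨H, hHnil, hHfi⟩
  intro g h hfin k l hk hl heq
  haveI := hHfi
  set G' := Subgroup.closure ({g, h} : Set G) with hG'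
  have hgmem : g ∈ G' := Subgroup.subset_closure (by simp)
  have hhmem : h ∈ G' := Subgroup.subset_closure (by simp)
  haveI : Group.FG ↥G' := (Group.fg_iff_subgroup_fg G').2
    ((Subgroup.fg_iff G').2 ⟨{g, h}, rfl, Set.toFinite _⟩)
  set N₁ := H.subgroupOf G' with hN₁
  haveI : Group.IsNilpotent ↥N₁ := by
    have hle : Subgroup.map G'.subtype N₁ ≤ H := by
      rintro x ⟨y, hy, rfl⟩
      exact hy
    haveI := hHnil
    haveI : Group.IsNilpotent ↥((Subgroup.map G'.subtype N₁).subgroupOf H) :=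
      Subgroup.isNilpotent _
    have e1 : ↥((Subgroup.map G'.subtype N₁).subgroupOf H) ≃* ↥(Subgroup.map G'.subtype N₁) :=
      Subgroup.subgroupOfEquivOfLe hle
    have e2 : ↥N₁ ≃* ↥(Subgroup.map G'.subtype N₁) :=
      Subgroup.equivMapOfInjective N₁ G'.subtype G'.subtype_injective
    exact nilpotent_of_surjective (e2.symm.toMonoidHom.comp e1.toMonoidHom)
      (e2.symm.surjective.comp e1.surjective)
  set C := N₁.normalCore with hC
  haveI : C.FiniteIndex := Subgroup.finiteIndex_normalCore N₁
  haveI hCfg : Group.FG ↥C := Subgroup.fg_of_index_ne_zero C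
  haveI hCnil : Group.IsNilpotent ↥C := by
    haveI : Group.IsNilpotent ↥(C.subgroupOf N₁) := Subgroup.isNilpotent _
    have e3 : ↥(C.subgroupOf N₁) ≃* ↥C := Subgroup.subgroupOfEquivOfLe N₁.normalCore_le
    exact nilpotent_of_surjective e3.toMonoidHom e3.surjective
  have hbal : IsBalanced ↥G' := balanced_of_normal C hCfg hCnil
  -- transfer
  let g' : ↥G' := ⟨g, hgmem⟩
  let h' : ↥G' := ⟨h, hhmem⟩
  have hfin' : ¬ IsOfFinOrder h' := by
    intro hf
    obtain ⟨r, hr, hr1⟩ := isOfFinOrder_iff_pow_eq_one.1 hf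
    refine hfin (isOfFinOrder_iff_pow_eq_one.2 ⟨r, hr, ?_⟩)
    have := congrArg (fun x : ↥G' => (x : G)) hr1
    simpa using this
  refine hbal g' h' hfin' k l hk hl ?_
  refine Subtype.ext ?_
  show (g : G) * ((h' ^ k : ↥G') : G) * g⁻¹ = ((h' ^ l : ↥G') : G)
  rw [show ((h' ^ k : ↥G') : G) = h ^ k from by rw [SubgroupClass.coe_zpow],
    show ((h' ^ l : ↥G') : G) = h ^ l from by rw [SubgroupClass.coe_zpow]]
  exact heq
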